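/- Let U, H be separable Hilbert spaces and σ : ℝ_+ × B → L₂(U, H) a measurable, (B_t(B))-adapted Hilbert–Schmidt-operator-valued process on a filtered measurable path space B. For (t, y) ∈ ℝ_+ × B define ψ(t,y) ∈ L(U) as the orthogonal projection onto ker σ(t,y) and φ(t,y) := id_U − ψ(t,y) the orthogonal projection onto (ker σ(t,y))^⊥. Then for each fixed u ∈ U, the U-valued map (t, y) ↦ ψ(t, y)(u) is jointly measurable and adapted; i.e., ψ and φ are measurable and adapted with respect to the strong Borel σ-algebra on L(U). -/

import Mathlib

open MeasureTheory
open scoped RealInnerProductSpace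
open InnerProductSpace

set_option linter.unusedSectionVars false

section aux
variable {Ω U H : Type*} [mΩ : MeasurableSpace Ω]
  [NormedAddCommGroup U] [InnerProductSpace ℝ U] [CompleteSpace U] [SecondCountableTopology U]
  [MeasurableSpace U] [BorelSpace U]
  [NormedAddCommGroup H] [InnerProductSpace ℝ H] [CompleteSpace H] [SecondCountableTopology H]
  [MeasurableSpace H] [BorelSpace H]
lemma meas_gramSchmidt (v : ℕ → Ω → U) (hv : ∀ k, Measurable (v k)) :
    ∀ n, Measurable fun ω => gramSchmidt ℝ (fun k => v k ω) n := by
  intro n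
  induction n using Nat.strong_induction_on with
  | _ n ih =>
    have heq : (fun ω => gramSchmidt ℝ (fun k => v k ω) n)
        = fun ω => v n ω - ∑ i ∈ Finset.Iio n,
            ((⟪gramSchmidt ℝ (fun k => v k ω) i, v n ω⟫
              / ((‖gramSchmidt ℝ (fun k => v k ω) i‖ : ℝ) ^ 2)) •
              gramSchmidt ℝ (fun k => v k ω) i) := by
      funext ω
      rw [gramSchmidt_def]
      congr 1
      exact Finset.sum_congr rfl fun i _ => Submodule.starProjection_singleton ℝ _
    rw [heq]
    refine (hv n).sub (Finset.measurable_sum _ fun i hi => ?_)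
    have hm := ih i (Finset.mem_Iio.mp hi)
    exact ((hm.inner (hv n)).div ((hm.norm).pow_const 2)).smul hm

lemma meas_gramSchmidtNormed (v : ℕ → Ω → U) (hv : ∀ k, Measurable (v k)) (n : ℕ) :
    Measurable fun ω => gramSchmidtNormed ℝ (fun k => v k ω) n := by
  have h := meas_gramSchmidt v hv n
  simp only [gramSchmidtNormed]
  exact h.norm.inv.smul h

lemma bessel_sq_summable (g : ℕ → U) (horth : ∀ i j, i ≠ j → ⟪g i, g j⟫ = 0)
    (hlen : ∀ i, ‖g i‖ = 1 ∨ g i = 0) (u : U) :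
    Summable fun i => ⟪u, g i⟫ ^ 2 := by
  refine summable_of_sum_range_le (c := ‖u‖ ^ 2) (fun n => sq_nonneg _) fun n => ?_
  set c : ℕ → ℝ := fun i => ⟪u, g i⟫ with hc
  set S := ∑ i ∈ Finset.range n, c i • g i with hS
  have hdiag : ∀ i ∈ Finset.range n, ⟪c i • g i, S⟫ = c i ^ 2 := by
    intro i hmem
    rw [hS, inner_sum]
    rw [Finset.sum_eq_single i]
    · rcases hlen i with h1 | h0
      · rw [real_inner_smul_left, real_inner_smul_right, real_inner_self_eq_norm_sq, h1]
        ring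
      · simp [hc, h0]
    · intro j _ hji
      rw [real_inner_smul_left, real_inner_smul_right, horth i j (Ne.symm hji)]
      ring
    · intro h
      exact absurd hmem h
  have hSS : ⟪S, S⟫ = ∑ i ∈ Finset.range n, c i ^ 2 := by
    rw [hS, sum_inner]
    exact Finset.sum_congr rfl hdiag
  have huS : ⟪u, S⟫ = ∑ i ∈ Finset.range n, c i ^ 2 := by
    rw [hS, inner_sum]
    refine Finset.sum_congr rfl fun i hi => ?_
    rcases hlen i with h1 | h0
    · rw [real_inner_smul_right, sq]
    · simp [hc, h0]
  have hnorm : ‖S‖ ^ 2 = ∑ i ∈ Finset.range n, c i ^ 2 := by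
    rw [← real_inner_self_eq_norm_sq, hSS]
  have hle : ⟪u, S⟫ ≤ ‖u‖ * ‖S‖ := real_inner_le_norm u S
  nlinarith [sq_nonneg (‖u‖ - ‖S‖), norm_nonneg S, norm_nonneg u, huS, hnorm]

lemma orthonormal_or_zero_summable (g : ℕ → U) (horth : ∀ i j, i ≠ j → ⟪g i, g j⟫ = 0)
    (hlen : ∀ i, ‖g i‖ = 1 ∨ g i = 0) (u : U) :
    Summable fun i => (⟪u, g i⟫ : ℝ) • g i := by
  set G : ℕ → Submodule ℝ U := fun i => Submodule.span ℝ {g i} with hG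
  have hV : OrthogonalFamily ℝ (fun i => G i) (fun i => (G i).subtypeₗᵢ) := by
    intro i j hij x y
    obtain ⟨a, ha⟩ := Submodule.mem_span_singleton.mp x.2
    obtain ⟨b, hb⟩ := Submodule.mem_span_singleton.mp y.2
    have : ⟪(x : U), (y : U)⟫ = 0 := by
      rw [← ha, ← hb, real_inner_smul_left, real_inner_smul_right, horth i j hij]
      ring
    simpa using this
  set f : ∀ i, G i := fun i => ⟨⟪u, g i⟫ • g i,
    Submodule.mem_span_singleton.mpr ⟨_, rfl⟩⟩ with hf
  have hsum : Summable fun i => ‖f i‖ ^ 2 := by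
    refine Summable.of_nonneg_of_le (fun i => sq_nonneg _) (fun i => ?_)
      (bessel_sq_summable g horth hlen u)
    have : ‖f i‖ = ‖⟪u, g i⟫ • g i‖ := rfl
    rw [this, norm_smul]
    rcases hlen i with h1 | h0
    · rw [h1]; simp [Real.norm_eq_abs, sq_abs]
    · simp [h0, sq_nonneg]
  have := (hV.summable_iff_norm_sq_summable f).mpr hsum
  simpa [hf] using this

lemma inner_vanish_span (w : U) (s : Set U) (hs : ∀ y ∈ s, ⟪w, y⟫ = 0) :
    ∀ y ∈ Submodule.span ℝ s, ⟪w, y⟫ = 0 := by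
  intro y hy
  have hle : Submodule.span ℝ s ≤ LinearMap.ker (innerSL ℝ w : U →ₗ[ℝ] ℝ) :=
    Submodule.span_le.mpr fun y hy => LinearMap.mem_ker.mpr (hs y hy)
  simpa using hle hy

lemma core_meas (A : Ω → U →L[ℝ] H) (bU : HilbertBasis ℕ ℝ U)
    (hA : ∀ u : U, Measurable fun ω => A ω u)
    (ζ : Ω → U →L[ℝ] U)
    (hker : ∀ ω u, A ω (ζ ω u) = 0)
    (horth : ∀ ω u w, A ω w = 0 → ⟪u - ζ ω u, w⟫ = 0)
    (u : U) : Measurable fun ω => ζ ω u := by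
  classical
  set v : ℕ → Ω → U := fun k ω => ContinuousLinearMap.adjoint (A ω) (A ω (bU k)) with hv_def
  -- measurability of v
  have hv : ∀ k, Measurable (v k) := by
    intro k
    have hrepr : ∀ ω, HasSum (fun j => (⟪A ω (bU j), A ω (bU k)⟫ : ℝ) • bU j) (v k ω) := by
      intro ω
      have h := bU.hasSum_repr (v k ω)
      convert h using 2 with j
      rw [bU.repr_apply_apply]
      congr 1
      rw [ContinuousLinearMap.adjoint_inner_right]
    refine measurable_of_tendsto_metrizable
      (f := fun n ω => ∑ j ∈ Finset.range n, (⟪A ω (bU j), A ω (bU k)⟫ : ℝ) • bU j)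
      (fun n => Finset.measurable_sum _ fun j _ =>
        ((hA (bU j)).inner (hA (bU k))).smul_const _) ?_
    rw [tendsto_pi_nhds]
    exact fun ω => (hrepr ω).tendsto_sum_nat
  -- Gram-Schmidt family
  set g : ℕ → Ω → U := fun n ω => gramSchmidtNormed ℝ (fun k => v k ω) n with hg_def
  have hgmeas : ∀ n, Measurable (g n) := fun n => meas_gramSchmidtNormed v hv n
  have hgorth : ∀ ω i j, i ≠ j → ⟪g i ω, g j ω⟫ = 0 := by
    intro ω i j hij
    simp only [hg_def, gramSchmidtNormed]
    rw [inner_smul_left, inner_smul_right, gramSchmidt_orthogonal ℝ _ hij]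
    simp
  have hglen : ∀ ω i, ‖g i ω‖ = 1 ∨ g i ω = 0 := by
    intro ω i
    by_cases h : g i ω = 0
    · exact Or.inr h
    · exact Or.inl (gramSchmidtNormed_unit_length' h)
  have hsum : ∀ ω, Summable fun i => (⟪u, g i ω⟫ : ℝ) • g i ω := fun ω =>
    orthonormal_or_zero_summable _ (hgorth ω) (hglen ω) u
  -- identification of ζ ω u
  have hkey : ∀ ω, ζ ω u = u - ∑' i, (⟪u, g i ω⟫ : ℝ) • g i ω := by
    intro ω
    set x := ∑' i, (⟪u, g i ω⟫ : ℝ) • g i ω with hx_def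
    have hx : HasSum (fun i => (⟪u, g i ω⟫ : ℝ) • g i ω) x := (hsum ω).hasSum
    -- coefficients of x
    have hcoeff : ∀ j, ⟪g j ω, x⟫ = ⟪u, g j ω⟫ * ⟪g j ω, g j ω⟫ := by
      intro j
      have h1 := (innerSL ℝ (g j ω)).hasSum hx
      have h2 : HasSum (fun i => (innerSL ℝ (g j ω)) ((⟪u, g i ω⟫ : ℝ) • g i ω))
          ((innerSL ℝ (g j ω)) ((⟪u, g j ω⟫ : ℝ) • g j ω)) := by
        refine hasSum_single j fun i hi => ?_
        simp only [innerSL_apply_apply, real_inner_smul_right]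
        rw [hgorth ω j i (Ne.symm hi)]
        ring
      have := h1.unique h2
      simpa [innerSL_apply_apply, real_inner_smul_right] using this
    have hxu : ∀ j, ⟪x - u, g j ω⟫ = 0 := by
      intro j
      rcases hglen ω j with h1 | h0
      · have h2 : ⟪g j ω, g j ω⟫ = 1 := by
          rw [real_inner_self_eq_norm_sq, h1]; norm_num
        have h3 : ⟪x, g j ω⟫ = ⟪u, g j ω⟫ := by
          rw [real_inner_comm]
          rw [hcoeff j, h2, mul_one]
        rw [inner_sub_left, h3, sub_self]
      · simp [h0]
    -- (a) x - u ⊥ v k ω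
    have hxv : ∀ k, ⟪x - u, v k ω⟫ = 0 := by
      intro k
      have hspan : Submodule.span ℝ ((fun k => v k ω) '' Set.Iic k)
          = Submodule.span ℝ ((fun j => g j ω) '' Set.Iic k) := by
        rw [← span_gramSchmidt_Iic ℝ (fun k => v k ω) k]
        exact (span_gramSchmidtNormed _ _).symm
      have hmem : v k ω ∈ Submodule.span ℝ ((fun j => g j ω) '' Set.Iic k) := by
        rw [← hspan]
        exact Submodule.subset_span ⟨k, Set.mem_Iic.mpr le_rfl, rfl⟩
      refine inner_vanish_span (x - u) _ ?_ _ hmem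
      rintro y ⟨j, -, rfl⟩
      exact hxu j
    -- (b) x ⊥ ker A ω
    have hxker : ∀ w : U, A ω w = 0 → ⟪x, w⟫ = 0 := by
      intro w hw
      have hgw : ∀ i, ⟪w, g i ω⟫ = 0 := by
        intro i
        have hspan : Submodule.span ℝ ((fun j => g j ω) '' Set.Iic i)
            = Submodule.span ℝ ((fun k => v k ω) '' Set.Iic i) := by
          rw [← span_gramSchmidt_Iic ℝ (fun k => v k ω) i]
          exact span_gramSchmidtNormed _ _
        have hmem : g i ω ∈ Submodule.span ℝ ((fun k => v k ω) '' Set.Iic i) := by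
          rw [← hspan]
          exact Submodule.subset_span ⟨i, Set.mem_Iic.mpr le_rfl, rfl⟩
        refine inner_vanish_span w _ ?_ _ hmem
        rintro y ⟨j, -, rfl⟩
        rw [real_inner_comm, hv_def]
        rw [ContinuousLinearMap.adjoint_inner_left, hw]
        simp
      have h1 := (innerSL ℝ w).hasSum hx
      have h2 : HasSum (fun i => (innerSL ℝ w) ((⟪u, g i ω⟫ : ℝ) • g i ω)) 0 := by
        convert hasSum_zero with i
        simp only [innerSL_apply_apply, real_inner_smul_right]
        rw [hgw i]
        ring
      rw [real_inner_comm]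
      simpa [innerSL_apply_apply] using h1.unique h2
    -- A ω (u - x) = 0
    have hAux : A ω (u - x) = 0 := by
      have hperp : ∀ k, ⟪A ω (u - x), A ω (bU k)⟫ = 0 := by
        intro k
        have heq : ⟪A ω (u - x), A ω (bU k)⟫ = ⟪u - x, v k ω⟫ := by
          rw [hv_def]
          rw [← ContinuousLinearMap.adjoint_inner_right]
        rw [heq, ← neg_sub x u, inner_neg_left, hxv k, neg_zero]
      -- A ω (u - x) is in the closed span of the A ω (bU k)
      have hrepr := bU.hasSum_repr (u - x)
      have hAh : HasSum (fun j => (bU.repr (u - x) j : ℝ) • A ω (bU j)) (A ω (u - x)) := by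
        have h0 := (A ω).hasSum hrepr
        simpa only [_root_.map_smul] using h0
      have h1 := (innerSL ℝ (A ω (u - x))).hasSum hAh
      have h2 : HasSum
          (fun j => (innerSL ℝ (A ω (u - x))) ((bU.repr (u - x) j : ℝ) • A ω (bU j))) 0 := by
        convert hasSum_zero with j
        simp only [innerSL_apply_apply, real_inner_smul_right]
        rw [hperp j]
        ring
      have : ⟪A ω (u - x), A ω (u - x)⟫ = (0 : ℝ) := by
        simpa only [innerSL_apply_apply] using h1.unique h2
      exact inner_self_eq_zero.mp this
    -- uniqueness
    have hd : A ω (ζ ω u - (u - x)) = 0 := by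
      rw [map_sub, hker ω u, hAux, sub_zero]
    set d := ζ ω u - (u - x) with hd_def
    have hdd : ⟪d, d⟫ = (0 : ℝ) := by
      have e1 : ⟪u - ζ ω u, d⟫ = 0 := horth ω u d hd
      have e2 : ⟪x, d⟫ = 0 := hxker d hd
      have : d = x - (u - ζ ω u) := by rw [hd_def]; abel
      calc ⟪d, d⟫ = ⟪x - (u - ζ ω u), d⟫ := by rw [← this]
        _ = ⟪x, d⟫ - ⟪u - ζ ω u, d⟫ := inner_sub_left _ _ _
        _ = 0 := by rw [e1, e2]; ring
    have : d = 0 := inner_self_eq_zero.mp hdd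
    have := sub_eq_zero.mp this
    rw [this]
  -- conclude measurability
  have hxmeas : Measurable fun ω => ∑' i, (⟪u, g i ω⟫ : ℝ) • g i ω := by
    refine measurable_of_tendsto_metrizable
      (f := fun n ω => ∑ i ∈ Finset.range n, (⟪u, g i ω⟫ : ℝ) • g i ω)
      (fun n => Finset.measurable_sum _ fun i _ =>
        (measurable_const.inner (hgmeas i)).smul (hgmeas i)) ?_
    rw [tendsto_pi_nhds]
    exact fun ω => (hsum ω).hasSum.tendsto_sum_nat
  simp only [hkey]
  exact measurable_const.sub hxmeas

end aux

/-- For a measurable, adapted Hilbert–Schmidt-operator-valued process `σ(t,y)` on a Polish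
path space `B`, the orthogonal projections `ψ(t,y)` onto `ker σ(t,y)` and
`φ(t,y) = id − ψ(t,y)` onto `(ker σ(t,y))ᗮ` are (strongly) measurable and adapted:
for every `u ∈ U`, the map `(t,y) ↦ ψ(t,y)u` is jointly measurable and
`y ↦ ψ(t,y)u` is `𝓑_t`-measurable for each `t` (and likewise for `φ`). -/
theorem kernel_projection_measurable_adapted
    {U H B : Type*}
    [NormedAddCommGroup U] [InnerProductSpace ℝ U] [CompleteSpace U] [SecondCountableTopology U]
    [MeasurableSpace U] [BorelSpace U]
    [NormedAddCommGroup H] [InnerProductSpace ℝ H] [CompleteSpace H] [SecondCountableTopology H]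
    [MeasurableSpace H] [BorelSpace H]
    [TopologicalSpace B] [PolishSpace B] [mB : MeasurableSpace B] [BorelSpace B]
    (𝓑 : ℝ → MeasurableSpace B) (h𝓑 : ∀ t, 𝓑 t ≤ mB) (hmono : Monotone 𝓑)
    (σ : ℝ → B → U →L[ℝ] H)
    (bU : HilbertBasis ℕ ℝ U)
    (hHS : ∀ t y, Summable fun k => ‖σ t y (bU k)‖ ^ 2)
    (hmeas : ∀ u : U, Measurable fun p : ℝ × B => σ p.1 p.2 u)
    (hadapt : ∀ (t : ℝ) (u : U), Measurable[𝓑 t] fun y => σ t y u)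
    (ψ φ : ℝ → B → U →L[ℝ] U)
    -- `ψ(t,y)` is the orthogonal projection onto `ker σ(t,y)`
    (hψker : ∀ t y u, σ t y (ψ t y u) = 0)
    (hψorth : ∀ t y u v, σ t y v = 0 → ⟪u - ψ t y u, v⟫ = 0)
    -- `φ(t,y)` is the orthogonal projection onto `(ker σ(t,y))ᗮ`
    (hφ : ∀ t y, φ t y = ContinuousLinearMap.id ℝ U - ψ t y) :
    (∀ u : U, Measurable fun p : ℝ × B => ψ p.1 p.2 u) ∧
    (∀ (u : U) (t : ℝ), Measurable[𝓑 t] fun y => ψ t y u) ∧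
    (∀ u : U, Measurable fun p : ℝ × B => φ p.1 p.2 u) ∧
    (∀ (u : U) (t : ℝ), Measurable[𝓑 t] fun y => φ t y u) := by
  have hψjoint : ∀ u : U, Measurable fun p : ℝ × B => ψ p.1 p.2 u := fun u =>
    core_meas (fun p : ℝ × B => σ p.1 p.2) bU hmeas (fun p => ψ p.1 p.2)
      (fun p u => hψker p.1 p.2 u) (fun p u w hw => hψorth p.1 p.2 u w hw) u
  have hψadapt : ∀ (u : U) (t : ℝ), Measurable[𝓑 t] fun y => ψ t y u := fun u t =>
    core_meas (mΩ := 𝓑 t) (fun y => σ t y) bU (hadapt t) (fun y => ψ t y)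
      (fun y u => hψker t y u) (fun y u w hw => hψorth t y u w hw) u
  have hφeq : ∀ t y (u : U), φ t y u = u - ψ t y u := by
    intro t y u
    rw [hφ]
    simp
  refine ⟨hψjoint, hψadapt, fun u => ?_, fun u t => ?_⟩
  · simp only [hφeq]
    exact measurable_const.sub (hψjoint u)
  · simp only [hφeq]
    exact Measurable.sub (m := 𝓑 t) measurable_const (hψadapt u t)
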